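/- arXiv:1810.03634 — 3 statements merged into one kernel-verified Lean document; each statement's English description precedes it below -/
import Mathlib

section
/- If ρ is a smooth, rapidly decaying solution of the 2D Keller–Segel equation with mass M > 8π and finite initial second moment, then the solution cannot remain smooth and rapidly decaying for all time; specifically, any smooth solution must break down by time T* = M₂(0)/(4M(M/(8π) − 1)), since the second moment would become negative. -/
open MeasureTheory Real Filter Set

/-- Finite time blow-up for supercritical mass in the 2D Keller–Segel equation: if the
mass satisfies `M > 8π`, the initial second moment is finite, and the virial identity
`d/dt M₂ = 4M(1 − M/(8π))` holds along the (nonnegative) solution on `[0,T)`, then the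
solution must break down by time `T* = M₂(0)/(4M(M/(8π) − 1))`, i.e. `T ≤ T*`,
since otherwise the second moment would become negative. -/
theorem keller_segel_blowup (T : ℝ) (hT : 0 < T) (ρ : ℝ → (Fin 2 → ℝ) → ℝ) (M : ℝ)
    (hnn : ∀ t x, 0 ≤ ρ t x)
    (hmass : ∀ t ∈ Ico (0 : ℝ) T, ∫ x, ρ t x = M)
    (hM : 8 * π < M)
    (hm2 : Integrable (fun x : Fin 2 → ℝ => (∑ i, x i ^ 2) * ρ 0 x))
    (hvirial : ∀ t ∈ Ico (0 : ℝ) T,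
      HasDerivAt (fun s => ∫ x, (∑ i, x i ^ 2) * ρ s x)
        (4 * M * (1 - M / (8 * π))) t) :
    T ≤ (∫ x, (∑ i, x i ^ 2) * ρ 0 x) / (4 * M * (M / (8 * π) - 1)) := by
  set f : ℝ → ℝ := fun s => ∫ x, (∑ i, x i ^ 2) * ρ s x with hf
  set c : ℝ := 4 * M * (1 - M / (8 * π)) with hc
  have hπ : (0 : ℝ) < 8 * π := by positivity
  have hMpos : 0 < M := lt_trans hπ hM
  have hD : 0 < 4 * M * (M / (8 * π) - 1) := by
    have : 1 < M / (8 * π) := (one_lt_div hπ).2 hM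
    have h1 : 0 < M / (8 * π) - 1 := by linarith
    positivity
  have hDc : 4 * M * (M / (8 * π) - 1) = -c := by ring
  -- f t = f 0 + c * t on [0, T)
  have hlin : ∀ t ∈ Ico (0 : ℝ) T, f t = f 0 + c * t := by
    intro t ht
    obtain ⟨ht0, htT⟩ := ht
    set g : ℝ → ℝ := fun s => f s - c * s with hg
    have hd : ∀ s ∈ Icc (0 : ℝ) t, HasDerivAt g 0 s := by
      intro s hs
      have hsT : s ∈ Ico (0 : ℝ) T := ⟨hs.1, lt_of_le_of_lt hs.2 htT⟩
      have h1 : HasDerivAt (fun s : ℝ => c * s) c s := by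
        simpa using (hasDerivAt_id s).const_mul c
      exact ((hvirial s hsT).sub h1).congr_deriv (by linarith [hc])
    have hcont : ContinuousOn g (Icc 0 t) := fun s hs =>
      (hd s hs).continuousAt.continuousWithinAt
    have hderiv : ∀ s ∈ Ico (0 : ℝ) t, HasDerivWithinAt g 0 (Ici s) s := fun s hs =>
      (hd s ⟨hs.1, hs.2.le⟩).hasDerivWithinAt
    have := constant_of_has_deriv_right_zero hcont hderiv t ⟨ht0, le_refl t⟩
    have hgt : f t - c * t = f 0 - c * 0 := this
    linarith
  have hfnn : ∀ t, 0 ≤ f t := by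
    intro t
    apply integral_nonneg
    intro x
    have : 0 ≤ ∑ i, x i ^ 2 := Finset.sum_nonneg fun i _ => sq_nonneg _
    exact mul_nonneg this (hnn t x)
  -- conclude
  by_contra h
  push_neg at h
  set B : ℝ := f 0 / (4 * M * (M / (8 * π) - 1)) with hB
  have hB0 : 0 ≤ B := div_nonneg (hfnn 0) hD.le
  set t : ℝ := (B + T) / 2 with htdef
  have htIco : t ∈ Ico (0 : ℝ) T := ⟨by positivity, by simp only [htdef]; linarith⟩
  have h1 : f t = f 0 + c * t := hlin t htIco
  have h2 : 0 ≤ f t := hfnn t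
  have h3 : (4 * M * (M / (8 * π) - 1)) * t ≤ f 0 := by
    rw [hDc]; linarith
  have h4 : t ≤ B := (le_div_iff₀' hD).2 h3
  have : B < t := by simp only [htdef]; linarith
  linarith
end

section
/- Let W ∈ L¹(ℝ^d) with ∫W < −2, and for m = 2 define E[ρ] = ∫ρ² + (1/2)∫ρ(ρ*W). Then for any bounded continuous nonnegative ρ with ∫ρ² > 0 and finite mass, E[ρ_λ] < 0 for all sufficiently small λ > 0, where ρ_λ(x) = λ^dρ(λx). In particular inf E < 0 over densities of any fixed mass M. -/
open MeasureTheory Real Filter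

/-- Auxiliary: the (unnormalized) autocorrelation of `ρ`. -/
noncomputable def gAux (d : ℕ) (ρ : (Fin d → ℝ) → ℝ) (z : Fin d → ℝ) : ℝ :=
  ∫ u, ρ u * ρ (u - z)

/-- For `W ∈ L¹(ℝ^d)` with `∫ W < −2` and `m = 2`, the energy
`E[ρ] = ∫ ρ² + (1/2) ∫ ρ (ρ*W)` satisfies `E[ρ_λ] < 0` for all sufficiently small
`λ > 0`, where `ρ_λ(x) = λ^d ρ(λx)`; in particular, there is a density of the same
mass `M = ∫ ρ` with negative energy, so `inf E < 0` among densities of mass `M`. -/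
theorem critical_power_negative_energy (d : ℕ) (W ρ : (Fin d → ℝ) → ℝ)
    (hW : Integrable W) (hWneg : (∫ x, W x) < -2)
    (hρc : Continuous ρ) (hρb : ∃ C, ∀ x, ρ x ≤ C)
    (hnn : ∀ x, 0 ≤ ρ x) (hint : Integrable ρ)
    (hsq : Integrable (fun x => ρ x ^ 2)) (hpos : 0 < ∫ x, ρ x ^ 2) :
    (∀ᶠ l in nhdsWithin (0 : ℝ) (Set.Ioi 0),
      (∫ x, (l ^ d * ρ (l • x)) ^ 2)
        + (1 / 2) * (∫ x, (l ^ d * ρ (l • x)) * ∫ y, (l ^ d * ρ (l • y)) * W (x - y)) < 0)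
    ∧ ∃ l : ℝ, 0 < l ∧
      (∫ x, (l ^ d * ρ (l • x)) ^ 2)
        + (1 / 2) * (∫ x, (l ^ d * ρ (l • x)) * ∫ y, (l ^ d * ρ (l • y)) * W (x - y)) < 0
      ∧ (∫ x, l ^ d * ρ (l • x)) = ∫ x, ρ x := by
  obtain ⟨C, hC⟩ := hρb
  have hC0 : 0 ≤ C := le_trans (hnn 0) (hC 0)
  have hfr : Module.finrank ℝ (Fin d → ℝ) = d := Module.finrank_fin_fun ℝ
  have hρnorm : ∀ x, ‖ρ x‖ ≤ C := fun x => by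
    rw [Real.norm_eq_abs, abs_of_nonneg (hnn x)]; exact hC x
  -- Integrability of the autocorrelation integrand
  have hgint : ∀ z : Fin d → ℝ, Integrable (fun u => ρ u * ρ (u - z)) := fun z =>
    (hint.comp_sub_right z).bdd_mul hρc.aestronglyMeasurable (Eventually.of_forall hρnorm)
  have hgnn : ∀ z, 0 ≤ gAux d ρ z := fun z =>
    integral_nonneg fun u => mul_nonneg (hnn u) (hnn _)
  have hgle : ∀ z, gAux d ρ z ≤ C * ∫ x, ρ x := by
    intro z
    have h1 : gAux d ρ z ≤ ∫ u, C * ρ u := by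
      refine integral_mono (hgint z) (hint.const_mul C) fun u => ?_
      calc ρ u * ρ (u - z) ≤ ρ u * C := mul_le_mul_of_nonneg_left (hC _) (hnn u)
        _ = C * ρ u := mul_comm _ _
    rwa [integral_const_mul] at h1
  have hgabs : ∀ z, |gAux d ρ z| ≤ C * ∫ x, ρ x := fun z => by
    rw [abs_of_nonneg (hgnn z)]; exact hgle z
  -- Continuity of the autocorrelation
  have hgcont : Continuous (gAux d ρ) := by
    rw [continuous_iff_continuousAt]
    intro z₀
    apply continuousAt_of_dominated (bound := fun u => C * ρ u)
    · exact Eventually.of_forall fun z =>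
        (hρc.mul (hρc.comp (continuous_id.sub continuous_const))).aestronglyMeasurable
    · refine Eventually.of_forall fun z => Eventually.of_forall fun u => ?_
      rw [Real.norm_eq_abs, abs_of_nonneg (mul_nonneg (hnn u) (hnn _))]
      calc ρ u * ρ (u - z) ≤ ρ u * C := mul_le_mul_of_nonneg_left (hC _) (hnn u)
        _ = C * ρ u := mul_comm _ _
    · exact hint.const_mul C
    · exact Eventually.of_forall fun u =>
        ((continuous_const.mul (hρc.comp (continuous_const.sub continuous_id))).continuousAt)
  have hg0 : gAux d ρ 0 = ∫ x, ρ x ^ 2 := by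
    simp [gAux, pow_two]
  -- The rescaled interaction converges
  have hlim : Tendsto (fun l : ℝ => ∫ y, W y * gAux d ρ (l • y)) (nhdsWithin 0 (Set.Ioi 0))
      (nhds (∫ y, W y * gAux d ρ 0)) := by
    apply tendsto_integral_filter_of_dominated_convergence
      (bound := fun y => |W y| * (C * ∫ x, ρ x))
    · exact Eventually.of_forall fun l =>
        hW.aestronglyMeasurable.mul
          ((hgcont.comp (continuous_const_smul l)).aestronglyMeasurable)
    · refine Eventually.of_forall fun l => Eventually.of_forall fun y => ?_
      rw [Real.norm_eq_abs, abs_mul]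
      exact mul_le_mul_of_nonneg_left (hgabs _) (abs_nonneg _)
    · exact hW.abs.mul_const _
    · refine Eventually.of_forall fun y => ?_
      have h1 : Tendsto (fun l : ℝ => l • y) (nhdsWithin 0 (Set.Ioi 0)) (nhds (0 : Fin d → ℝ)) := by
        have h2 : Tendsto (fun l : ℝ => l • y) (nhds 0) (nhds ((0 : ℝ) • y)) :=
          ((continuous_id.smul (continuous_const : Continuous fun _ : ℝ => y)).tendsto 0)
        rw [zero_smul] at h2
        exact h2.mono_left nhdsWithin_le_nhds
      exact (((hgcont.tendsto 0).comp h1).const_mul (W y))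
  have hlimval : (∫ y, W y * gAux d ρ 0) = (∫ x, W x) * ∫ x, ρ x ^ 2 := by
    rw [hg0, integral_mul_const]
  -- change of variables: mass
  have hmass : ∀ l : ℝ, 0 < l → (∫ x, l ^ d * ρ (l • x)) = ∫ x, ρ x := by
    intro l hl
    have h1 := Measure.integral_comp_smul_of_nonneg (volume : Measure (Fin d → ℝ)) ρ l (hR := hl.le)
    rw [hfr, smul_eq_mul] at h1
    rw [integral_const_mul, h1]
    field_simp
  -- change of variables: square term
  have hA : ∀ l : ℝ, 0 < l → (∫ x, (l ^ d * ρ (l • x)) ^ 2) = l ^ d * ∫ x, ρ x ^ 2 := by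
    intro l hl
    have h1 := Measure.integral_comp_smul_of_nonneg (volume : Measure (Fin d → ℝ))
      (fun u => ρ u ^ 2) l (hR := hl.le)
    rw [hfr, smul_eq_mul] at h1
    have h2 : (∫ x, (l ^ d * ρ (l • x)) ^ 2) = (l ^ d) ^ 2 * ∫ x, ρ (l • x) ^ 2 := by
      rw [← integral_const_mul]
      congr 1; funext x; ring
    rw [h2, h1]
    have hld : (0 : ℝ) < l ^ d := pow_pos hl d
    field_simp
  -- change of variables / Fubini: interaction term
  have hB : ∀ l : ℝ, 0 < l →
      (∫ x, (l ^ d * ρ (l • x)) * ∫ y, (l ^ d * ρ (l • y)) * W (x - y))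
        = l ^ d * ∫ y, W y * gAux d ρ (l • y) := by
    intro l hl
    have hld : (0 : ℝ) < l ^ d := pow_pos hl d
    set ρl : (Fin d → ℝ) → ℝ := fun x => l ^ d * ρ (l • x) with hρl
    have hρl_cont : Continuous ρl :=
      continuous_const.mul (hρc.comp (continuous_const_smul l))
    have hρl_int : Integrable ρl := (hint.comp_smul hl.ne').const_mul _
    have hρl_nn : ∀ x, 0 ≤ ρl x := fun x => mul_nonneg hld.le (hnn _)
    have hρl_bd : ∀ x, ρl x ≤ l ^ d * C := fun x =>
      mul_le_mul_of_nonneg_left (hC _) hld.le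
    -- reflect the inner integral
    have step1 : ∀ x, (∫ y, ρl y * W (x - y)) = ∫ y, ρl (x - y) * W y := by
      intro x
      have h := integral_sub_left_eq_self (fun y => ρl y * W (x - y)) volume x
      simp only [sub_sub_cancel] at h
      exact h.symm
    -- joint integrability
    have hcont2 : Continuous fun p : (Fin d → ℝ) × (Fin d → ℝ) => ρl p.1 * ρl (p.1 - p.2) :=
      (hρl_cont.comp continuous_fst).mul (hρl_cont.comp (continuous_fst.sub continuous_snd))
    have hWsnd : AEStronglyMeasurable (fun p : (Fin d → ℝ) × (Fin d → ℝ) => W p.2)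
        ((volume : Measure (Fin d → ℝ)).prod volume) := hW.aestronglyMeasurable.comp_quasiMeasurePreserving Measure.quasiMeasurePreserving_snd
    have hdom : Integrable (fun p : (Fin d → ℝ) × (Fin d → ℝ) =>
        (l ^ d * C * ρl p.1) * |W p.2|) ((volume : Measure (Fin d → ℝ)).prod volume) :=
      (hρl_int.const_mul (l ^ d * C)).mul_prod hW.abs
    have hF : Integrable (fun p : (Fin d → ℝ) × (Fin d → ℝ) =>
        (ρl p.1 * ρl (p.1 - p.2)) * W p.2) ((volume : Measure (Fin d → ℝ)).prod volume) := by
      refine hdom.mono' (hcont2.aestronglyMeasurable.mul hWsnd) ?_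
      refine Eventually.of_forall fun p => ?_
      rw [norm_mul, Real.norm_eq_abs, Real.norm_eq_abs,
        abs_of_nonneg (mul_nonneg (hρl_nn _) (hρl_nn _))]
      calc ρl p.1 * ρl (p.1 - p.2) * |W p.2| ≤ ρl p.1 * (l ^ d * C) * |W p.2| :=
            mul_le_mul_of_nonneg_right
              (mul_le_mul_of_nonneg_left (hρl_bd _) (hρl_nn _)) (abs_nonneg _)
        _ = l ^ d * C * ρl p.1 * |W p.2| := by ring
    -- the chain of equalities
    calc (∫ x, ρl x * ∫ y, ρl y * W (x - y))
        = ∫ x, ∫ y, (ρl x * ρl (x - y)) * W y := by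
          congr 1; funext x
          rw [step1 x, ← integral_const_mul]
          congr 1; funext y; ring
      _ = ∫ y, ∫ x, (ρl x * ρl (x - y)) * W y := integral_integral_swap hF
      _ = ∫ y, (∫ x, ρl x * ρl (x - y)) * W y := by
          congr 1; funext y
          rw [integral_mul_const]
      _ = ∫ y, (l ^ d * gAux d ρ (l • y)) * W y := by
          congr 1; funext y
          congr 1
          have h3 : ∀ x, ρl x * ρl (x - y)
              = (l ^ d) ^ 2 * ((fun u => ρ u * ρ (u - l • y)) (l • x)) := by
            intro x
            simp only [hρl, smul_sub]
            ring
          have h4 := Measure.integral_comp_smul_of_nonneg (volume : Measure (Fin d → ℝ))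
            (fun u => ρ u * ρ (u - l • y)) l (hR := hl.le)
          rw [hfr, smul_eq_mul] at h4
          have h5 : (∫ x, ρl x * ρl (x - y))
              = (l ^ d) ^ 2 * ∫ x, ρ (l • x) * ρ (l • x - l • y) := by
            rw [← integral_const_mul]
            congr 1; funext x
            rw [h3 x]
          rw [h5, h4]
          show (l ^ d) ^ 2 * ((l ^ d)⁻¹ * ∫ u, ρ u * ρ (u - l • y)) = l ^ d * gAux d ρ (l • y)
          rw [gAux]
          field_simp
      _ = l ^ d * ∫ y, W y * gAux d ρ (l • y) := by
          rw [← integral_const_mul]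
          congr 1; funext y; ring
  -- final limit and sign argument
  have key : Tendsto (fun l : ℝ => (∫ x, ρ x ^ 2)
        + (1 / 2) * ∫ y, W y * gAux d ρ (l • y)) (nhdsWithin 0 (Set.Ioi 0))
      (nhds ((∫ x, ρ x ^ 2) + (1 / 2) * ((∫ x, W x) * ∫ x, ρ x ^ 2))) := by
    rw [hlimval] at hlim
    exact tendsto_const_nhds.add (hlim.const_mul (1 / 2))
  have hneg : (∫ x, ρ x ^ 2) + (1 / 2) * ((∫ x, W x) * ∫ x, ρ x ^ 2) < 0 := by
    nlinarith [mul_pos hpos (show (0:ℝ) < -(∫ x, W x) - 2 by linarith)]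
  have hev2 : ∀ᶠ l in nhdsWithin (0 : ℝ) (Set.Ioi 0),
      (∫ x, ρ x ^ 2) + (1 / 2) * (∫ y, W y * gAux d ρ (l • y)) < 0 :=
    key.eventually_lt_const hneg
  have hev : ∀ᶠ l in nhdsWithin (0 : ℝ) (Set.Ioi 0),
      (∫ x, (l ^ d * ρ (l • x)) ^ 2)
        + (1 / 2) * (∫ x, (l ^ d * ρ (l • x)) * ∫ y, (l ^ d * ρ (l • y)) * W (x - y)) < 0 := by
    filter_upwards [hev2, self_mem_nhdsWithin] with l h1 h2
    have hl : 0 < l := h2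
    rw [hA l hl, hB l hl]
    have heq : l ^ d * (∫ x, ρ x ^ 2) + 1 / 2 * (l ^ d * ∫ y, W y * gAux d ρ (l • y))
        = l ^ d * ((∫ x, ρ x ^ 2) + 1 / 2 * ∫ y, W y * gAux d ρ (l • y)) := by ring
    rw [heq]
    exact mul_neg_of_pos_of_neg (pow_pos hl d) h1
  refine ⟨hev, ?_⟩
  obtain ⟨l, hl1, hl2⟩ := (hev.and self_mem_nhdsWithin).exists
  exact ⟨l, hl2, hl1, hmass l hl2⟩
end

section
/- Γ-limit of the entropy under slow diffusion at fixed density: for any nonnegative measurable ρ on ℝ^d, lim_{m→∞} (1/(m−1))∫ρ^m dx = 0 if ‖ρ‖_∞ ≤ 1 and ∫ρ^m dx is finite for some m, while if |{ρ > 1+δ}| > 0 for some δ > 0 then lim_{m→∞}(1/(m−1))∫ρ^m dx = +∞. Consequently, E_m[ρ] → E_∞[ρ] pointwise, where E_∞[ρ] = W[ρ] if ‖ρ‖_∞ ≤ 1 and +∞ otherwise. -/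
open MeasureTheory Real Filter

/-- Pointwise (Γ-)limit of the aggregation-diffusion energy under slow diffusion: for a
nonnegative measurable integrable `ρ` and bounded interaction part `Wv = W[ρ]`,
if `ρ ≤ 1` a.e. and `ρ^{m₀}` is integrable for some `m₀ > 1`, then
`E_m[ρ] = (1/(m−1)) ∫ ρ^m + Wv → Wv = E_∞[ρ]` as `m → ∞`; while if
`|{ρ > 1+δ}| > 0` for some `δ > 0`, then `(1/(m−1)) ∫ ρ^m → +∞`, so `E_m[ρ] → +∞ = E_∞[ρ]`. -/
theorem energy_slow_diffusion_limit (d : ℕ) (ρ : (Fin d → ℝ) → ℝ)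
    (hmeas : Measurable ρ) (hnn : ∀ x, 0 ≤ ρ x) (hint : Integrable ρ) (Wv : ℝ) :
    ((∀ᵐ x, ρ x ≤ 1) → (∃ m₀ : ℝ, 1 < m₀ ∧ Integrable (fun x => ρ x ^ m₀)) →
      Tendsto (fun m : ℝ => (1 / (m - 1)) * (∫ x, ρ x ^ m) + Wv) atTop (nhds Wv))
    ∧ ((∃ δ : ℝ, 0 < δ ∧ 0 < volume {x | 1 + δ < ρ x}) →
      Tendsto (fun m : ℝ =>
          ENNReal.ofReal (1 / (m - 1)) * ∫⁻ x, ENNReal.ofReal (ρ x ^ m))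
        atTop (nhds (⊤ : ENNReal))) := by
  constructor
  · rintro hle ⟨m₀, hm₀, hintm₀⟩
    set C : ℝ := ∫ x, ρ x ^ m₀ with hC
    have hC0 : 0 ≤ C := integral_nonneg fun x => Real.rpow_nonneg (hnn x) _
    -- pointwise a.e. bound for m ≥ m₀
    have hptwise : ∀ m : ℝ, m₀ ≤ m → ∀ᵐ x, ρ x ^ m ≤ ρ x ^ m₀ := by
      intro m hm
      filter_upwards [hle] with x hx
      rcases eq_or_lt_of_le (hnn x) with h0 | h0
      · rw [← h0, Real.zero_rpow (show (0:ℝ) < m by linarith).ne',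
          Real.zero_rpow (show (0:ℝ) < m₀ by linarith).ne']
      · exact Real.rpow_le_rpow_of_exponent_ge h0 hx hm
    have hintm : ∀ m : ℝ, m₀ ≤ m → Integrable (fun x => ρ x ^ m) := by
      intro m hm
      refine hintm₀.mono' ((hmeas.pow_const m).aestronglyMeasurable) ?_
      filter_upwards [hptwise m hm] with x hx
      rw [Real.norm_eq_abs, abs_of_nonneg (Real.rpow_nonneg (hnn x) _)]
      exact hx
    have hintle : ∀ m : ℝ, m₀ ≤ m → (∫ x, ρ x ^ m) ≤ C :=
      fun m hm => integral_mono_ae (hintm m hm) hintm₀ (hptwise m hm)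
    have key : Tendsto (fun m : ℝ => (1 / (m - 1)) * ∫ x, ρ x ^ m) atTop (nhds 0) := by
      have hupper : Tendsto (fun m : ℝ => C / (m - 1)) atTop (nhds 0) := by
        have : Tendsto (fun m : ℝ => m - 1) atTop atTop := by
          simpa [sub_eq_add_neg] using tendsto_atTop_add_const_right atTop (-1 : ℝ) tendsto_id
        exact Tendsto.div_atTop tendsto_const_nhds this
      refine tendsto_of_tendsto_of_tendsto_of_le_of_le' tendsto_const_nhds hupper ?_ ?_
      · filter_upwards [eventually_ge_atTop (max m₀ 2)] with m hm
        have hm1 : (1 : ℝ) < m := lt_of_lt_of_le one_lt_two (le_trans (le_max_right _ _) hm)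
        have h2 : 0 ≤ ∫ x, ρ x ^ m := integral_nonneg fun x => Real.rpow_nonneg (hnn x) _
        exact mul_nonneg (one_div_pos.mpr (by linarith)).le h2
      · filter_upwards [eventually_ge_atTop (max m₀ 2)] with m hm
        have hm1 : (1 : ℝ) < m := lt_of_lt_of_le one_lt_two (le_trans (le_max_right _ _) hm)
        have h1 : (0:ℝ) < 1 / (m - 1) := one_div_pos.mpr (by linarith)
        calc (1 / (m - 1)) * ∫ x, ρ x ^ m
            ≤ (1 / (m - 1)) * C :=
              mul_le_mul_of_nonneg_left (hintle m (le_trans (le_max_left _ _) hm)) h1.le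
          _ = C / (m - 1) := by ring
    have := key.add (tendsto_const_nhds (x := Wv))
    simpa using this
  · rintro ⟨δ, hδ, hS⟩
    set S := {x : Fin d → ℝ | 1 + δ < ρ x} with hSdef
    have hSm : MeasurableSet S := measurableSet_lt measurable_const hmeas
    set c : ENNReal := min (volume S) 1 with hc
    have hc0 : 0 < c := lt_min hS zero_lt_one
    have hcne : c ≠ ⊤ := ne_top_of_le_ne_top ENNReal.one_ne_top (min_le_right _ _)
    have hcr : 0 < c.toReal := ENNReal.toReal_pos hc0.ne' hcne
    have hb1 : (1:ℝ) < 1 + δ := by linarith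
    have hb0 : (0:ℝ) < 1 + δ := by linarith
    set L : ℝ := Real.log (1 + δ) with hL
    have hL0 : 0 < L := Real.log_pos hb1
    -- real growth: (1+δ)^m / (m-1) → ∞
    have hgrow : Tendsto (fun m : ℝ => (1 + δ) ^ m / (m - 1)) atTop atTop := by
      have h1 : Tendsto (fun m : ℝ => Real.exp (m * L) / (m * L)) atTop atTop := by
        have hcomp : Tendsto (fun m : ℝ => m * L) atTop atTop :=
          Tendsto.atTop_mul_const hL0 tendsto_id
        have := (Real.tendsto_exp_div_pow_atTop 1).comp hcomp
        simpa [Function.comp_def] using this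
      have h2 : Tendsto (fun m : ℝ => (m * L) / (m - 1)) atTop (nhds L) := by
        have hbase : Tendsto (fun m : ℝ => m / (m - 1)) atTop (nhds 1) := by
          have h0 : Tendsto (fun m : ℝ => 1 + 1 / (m - 1)) atTop (nhds 1) := by
            have : Tendsto (fun m : ℝ => m - 1) atTop atTop := by
              simpa [sub_eq_add_neg] using
                tendsto_atTop_add_const_right atTop (-1 : ℝ) tendsto_id
            have := Tendsto.div_atTop (tendsto_const_nhds (x := (1:ℝ))) this
            simpa using (tendsto_const_nhds (x := (1:ℝ))).add this
          refine h0.congr' ?_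
          filter_upwards [eventually_ge_atTop (2:ℝ)] with m hm
          have : m - 1 ≠ 0 := by linarith
          field_simp
          ring
        have := hbase.mul_const L
        simp only [one_mul] at this
        refine this.congr' ?_
        filter_upwards with m
        ring
      have := Tendsto.atTop_mul_pos hL0 h1 h2
      refine this.congr' ?_
      filter_upwards [eventually_ge_atTop (2:ℝ)] with m hm
      have hmL : m * L ≠ 0 := (mul_pos (by linarith) hL0).ne'
      rw [Real.rpow_def_of_pos hb0]
      field_simp
      ring
    -- lower bound function tends to ⊤
    have hlow : Tendsto (fun m : ℝ => ENNReal.ofReal (((1 + δ) ^ m / (m - 1)) * c.toReal))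
        atTop (nhds (⊤ : ENNReal)) :=
      ENNReal.tendsto_ofReal_atTop.comp (hgrow.atTop_mul_const hcr)
    refine tendsto_nhds_top_mono hlow ?_
    filter_upwards [eventually_ge_atTop (2:ℝ)] with m hm
    have hm1 : (1:ℝ) < m := by linarith
    have hm0 : (0:ℝ) ≤ m := by linarith
    have hlint : ENNReal.ofReal ((1 + δ) ^ m) * c ≤ ∫⁻ x, ENNReal.ofReal (ρ x ^ m) := by
      calc ENNReal.ofReal ((1 + δ) ^ m) * c
          ≤ ENNReal.ofReal ((1 + δ) ^ m) * volume S :=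
            mul_le_mul_right (min_le_left _ _) _
        _ = ∫⁻ x in S, ENNReal.ofReal ((1 + δ) ^ m) := (setLIntegral_const S _).symm
        _ ≤ ∫⁻ x in S, ENNReal.ofReal (ρ x ^ m) := by
            refine setLIntegral_mono (by fun_prop) ?_
            intro x hx
            exact ENNReal.ofReal_le_ofReal
              (Real.rpow_le_rpow hb0.le hx.le hm0)
        _ ≤ ∫⁻ x, ENNReal.ofReal (ρ x ^ m) :=
            setLIntegral_le_lintegral _ _
    have h1pos : (0:ℝ) < 1 / (m - 1) := one_div_pos.mpr (by linarith)
    calc ENNReal.ofReal (((1 + δ) ^ m / (m - 1)) * c.toReal)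
        = ENNReal.ofReal ((1 / (m - 1)) * (1 + δ) ^ m) * c := by
          rw [show ((1 + δ) ^ m / (m - 1)) * c.toReal
              = ((1 / (m - 1)) * (1 + δ) ^ m) * c.toReal by ring,
            ENNReal.ofReal_mul (mul_nonneg h1pos.le (Real.rpow_nonneg hb0.le m)),
            ENNReal.ofReal_toReal hcne]
      _ = ENNReal.ofReal (1 / (m - 1)) * (ENNReal.ofReal ((1 + δ) ^ m) * c) := by
          rw [ENNReal.ofReal_mul h1pos.le, mul_assoc]
      _ ≤ ENNReal.ofReal (1 / (m - 1)) * ∫⁻ x, ENNReal.ofReal (ρ x ^ m) :=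
          mul_le_mul_right hlint _
end
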